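/- Define h_r(x) = Σ_{j≥r} x^j/j! for integers r ≥ 0 (and h_r(x) = e^x for r < 0). Then for r ≥ 3 and λ > 0, the function t ↦ h_{r-2}(λt)/h_{r-3}(λt) = 1 - (λt)^{r-3}/((r-3)!·h_{r-3}(λt)) is increasing in t on (0, ∞). -/

import Mathlib

open scoped Nat

/-- The tail of the exponential series starting at index `r`. -/
noncomputable def expTail (r : ℕ) (x : ℝ) : ℝ := ∑' j : ℕ, if r ≤ j then x ^ j / (j !) else 0

noncomputable def gTail (m : ℕ) (x : ℝ) : ℝ := ∑' k : ℕ, x ^ k / ((m + k)! : ℝ)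

lemma summable_gTail (m : ℕ) (x : ℝ) : Summable fun k : ℕ => x ^ k / ((m + k)! : ℝ) := by
  apply Summable.of_norm
  refine Summable.of_nonneg_of_le (fun k => norm_nonneg _) (fun k => ?_)
    (Real.summable_pow_div_factorial |x|)
  rw [norm_div, norm_pow, Real.norm_eq_abs, Real.norm_eq_abs, Nat.abs_cast]
  apply div_le_div_of_nonneg_left (by positivity) (by positivity)
  exact_mod_cast Nat.factorial_le (Nat.le_add_left k m)

lemma summable_expTail (r : ℕ) (x : ℝ) :
    Summable fun j : ℕ => if r ≤ j then x ^ j / (j ! : ℝ) else 0 := by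
  apply Summable.of_norm
  refine Summable.of_nonneg_of_le (fun k => norm_nonneg _) (fun j => ?_)
    (Real.summable_pow_div_factorial |x|)
  by_cases h : r ≤ j
  · simp only [h, if_true, norm_div, norm_pow, Real.norm_eq_abs, Nat.abs_cast]
    exact le_refl _
  · simp only [h, if_false, norm_zero]
    positivity

lemma expTail_eq (m : ℕ) (x : ℝ) : expTail m x = x ^ m * gTail m x := by
  rw [expTail, gTail, ← tsum_mul_left]
  have hinj : Function.Injective (fun k : ℕ => m + k) := fun a b h => by simpa using h
  rw [← Function.Injective.tsum_eq hinj
    (f := fun j : ℕ => if m ≤ j then x ^ j / (j ! : ℝ) else 0) ?_]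
  · apply tsum_congr; intro k
    simp [Nat.le_add_right, pow_add, mul_div_assoc]
  · intro j hj
    simp only [Function.mem_support, ne_eq, ite_eq_right_iff, not_forall] at hj
    obtain ⟨h, -⟩ := hj
    exact ⟨j - m, by simp; omega⟩

lemma expTail_succ (m : ℕ) (x : ℝ) :
    expTail (m + 1) x = expTail m x - x ^ m / (m ! : ℝ) := by
  have h : ∀ j : ℕ, (if m ≤ j then x ^ j / (j ! : ℝ) else 0)
      = (if m + 1 ≤ j then x ^ j / (j ! : ℝ) else 0) + (if j = m then x ^ m / (m ! : ℝ) else 0) := by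
    intro j
    by_cases hj : j = m
    · subst hj; simp
    · by_cases h2 : m ≤ j
      · have : m + 1 ≤ j := by omega
        simp [h2, this, hj]
      · have : ¬ m + 1 ≤ j := by omega
        simp [h2, this, hj]
  have hEm : expTail m x = (∑' j : ℕ, if m + 1 ≤ j then x ^ j / (j ! : ℝ) else 0) + x ^ m / (m ! : ℝ) := by
    rw [expTail, tsum_congr h,
      Summable.tsum_add (summable_expTail (m+1) x) ((hasSum_ite_eq m (x ^ m / (m ! : ℝ))).summable),
      tsum_ite_eq]
  rw [expTail, hEm]
  ring

lemma gTail_pos (m : ℕ) {x : ℝ} (hx : 0 ≤ x) : 0 < gTail m x := by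
  refine Summable.tsum_pos (summable_gTail m x) (fun k => by positivity) 0 ?_
  simp only [pow_zero]
  positivity

lemma gTail_lt (m : ℕ) {x y : ℝ} (hx : 0 ≤ x) (hxy : x < y) :
    gTail m x < gTail m y := by
  refine Summable.tsum_lt_tsum (i := 1) (fun k => ?_) ?_ (summable_gTail m x) (summable_gTail m y)
  · exact (div_le_div_iff_of_pos_right (by positivity)).2 (pow_le_pow_left₀ hx hxy.le k)
  · rw [pow_one, pow_one]
    exact (div_lt_div_iff_of_pos_right (by positivity)).2 hxy

theorem stmt_11 (r : ℕ) (hr : 3 ≤ r) (lam : ℝ) (hlam : 0 < lam) :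
    (∀ t : ℝ, 0 < t →
      expTail (r - 2) (lam * t) / expTail (r - 3) (lam * t) =
        1 - (lam * t) ^ (r - 3) / (((r - 3)! : ℝ) * expTail (r - 3) (lam * t))) ∧
    StrictMonoOn (fun t => expTail (r - 2) (lam * t) / expTail (r - 3) (lam * t))
      (Set.Ioi (0:ℝ)) := by
  set m := r - 3 with hm
  have hr2 : r - 2 = m + 1 := by omega
  have key : ∀ t : ℝ, 0 < t →
      expTail (r - 2) (lam * t) / expTail m (lam * t) = 1 - 1 / ((m ! : ℝ) * gTail m (lam * t)) := by
    intro t ht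
    have hx : 0 < lam * t := by positivity
    have hg := gTail_pos m hx.le
    rw [hr2, expTail_succ, expTail_eq]
    have hxm : (0:ℝ) < (lam * t) ^ m := by positivity
    have hfac : (0:ℝ) < (m ! : ℝ) := by positivity
    field_simp
  constructor
  · intro t ht
    have hx : 0 < lam * t := by positivity
    have hg := gTail_pos m hx.le
    have hxm : (0:ℝ) < (lam * t) ^ m := by positivity
    have hfac : (0:ℝ) < (m ! : ℝ) := by positivity
    rw [key t ht]
    rw [expTail_eq]
    congr 1
    field_simp
  · intro s hs t ht hst
    simp only [Set.mem_Ioi] at hs ht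
    have hxs : 0 < lam * s := by positivity
    have hxt : 0 < lam * t := by positivity
    simp only
    rw [key s hs, key t ht]
    have hgs := gTail_pos m hxs.le
    have hgt := gTail_pos m hxt.le
    have hfac : (0:ℝ) < (m ! : ℝ) := by positivity
    have hlt : gTail m (lam * s) < gTail m (lam * t) :=
      gTail_lt m hxs.le (by nlinarith)
    have : 1 / ((m ! : ℝ) * gTail m (lam * t)) < 1 / ((m ! : ℝ) * gTail m (lam * s)) := by
      apply one_div_lt_one_div_of_lt (by positivity)
      nlinarith
    linarith
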